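/- Assume κ⁰ > 0, κ¹ > 0, that the pair is nondegenerate, and let positive integers μ⁰_i, μ¹_j (i,j ≥ 1) be given (the multiplicities of the eigenvalues ρ⁰_i, ρ¹_j). For λ > 0 define the Morse index n(λ) = Σ μ⁰_i μ¹_j, the sum being over all pairs (i,j) ≠ (1,1) with σ_{i,j}(λ) < 0. Then n(λ) is finite for every λ > 0, n is constant on each connected component of (0,∞) \ Λ, and for all but finitely many λ_* ∈ Λ the value of n on the component immediately to the left of λ_* differs from its value on the component immediately to the right of λ_*. -/

import Mathlib

set_option maxHeartbeats 1000000 in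
theorem stmt_9
    (m : ℕ) (hm : 3 ≤ m)
    (κ₀ κ₁ : ℝ)
    (ρ₀ ρ₁ : ℕ → ℝ)
    (hρ₀one : ρ₀ 1 = 0) (hρ₁one : ρ₁ 1 = 0)
    (hρ₀mono : ∀ i j : ℕ, 1 ≤ i → i < j → ρ₀ i < ρ₀ j)
    (hρ₁mono : ∀ i j : ℕ, 1 ≤ i → i < j → ρ₁ i < ρ₁ j)
    (hρ₀unb : ∀ C : ℝ, ∃ i : ℕ, 1 ≤ i ∧ C < ρ₀ i)
    (hρ₁unb : ∀ C : ℝ, ∃ j : ℕ, 1 ≤ j ∧ C < ρ₁ j)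
    (σ : ℕ → ℕ → ℝ → ℝ)
    (hσ : ∀ (i j : ℕ) (l : ℝ), 0 < l →
      σ i j l = ρ₀ i + ρ₁ j / l - (κ₀ + κ₁ / l) / ((m : ℝ) - 1))
    (hκ₀ : 0 < κ₀) (hκ₁ : 0 < κ₁)
    (istar jstar : ℕ)
    (histar1 : 1 ≤ istar) (histar2 : κ₀ / ((m : ℝ) - 1) ≤ ρ₀ istar)
    (histar3 : ∀ i : ℕ, 1 ≤ i → i < istar → ρ₀ i < κ₀ / ((m : ℝ) - 1))
    (hjstar1 : 1 ≤ jstar) (hjstar2 : κ₁ / ((m : ℝ) - 1) ≤ ρ₁ jstar)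
    (hjstar3 : ∀ j : ℕ, 1 ≤ j → j < jstar → ρ₁ j < κ₁ / ((m : ℝ) - 1))
    (hnondeg : ¬ (ρ₀ istar = κ₀ / ((m : ℝ) - 1) ∧ ρ₁ jstar = κ₁ / ((m : ℝ) - 1)))
    (Λ : Set ℝ)
    (hΛ : Λ = {l : ℝ | 0 < l ∧ ∃ i j : ℕ, 1 ≤ i ∧ 1 ≤ j ∧ (i, j) ≠ (1, 1) ∧ σ i j l = 0})
    (μ₀ μ₁ : ℕ → ℕ)
    (hμ₀ : ∀ i : ℕ, 1 ≤ μ₀ i) (hμ₁ : ∀ j : ℕ, 1 ≤ μ₁ j)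
    (N : ℝ → ℕ)
    (hN : ∀ l : ℝ, 0 < l → ∀ s : Finset (ℕ × ℕ),
      (∀ p : ℕ × ℕ, p ∈ s ↔ (1 ≤ p.1 ∧ 1 ≤ p.2 ∧ p ≠ (1, 1) ∧ σ p.1 p.2 l < 0)) →
      N l = ∑ p ∈ s, μ₀ p.1 * μ₁ p.2) :
    (∀ l : ℝ, 0 < l →
      {p : ℕ × ℕ | 1 ≤ p.1 ∧ 1 ≤ p.2 ∧ p ≠ (1, 1) ∧ σ p.1 p.2 l < 0}.Finite) ∧
    (∀ l₁ l₂ : ℝ, 0 < l₁ → l₁ ≤ l₂ → (∀ l : ℝ, l₁ ≤ l → l ≤ l₂ → l ∉ Λ) →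
      N l₁ = N l₂) ∧
    (∃ F : Set ℝ, F.Finite ∧ ∀ lstar ∈ Λ, lstar ∉ F →
      ∃ ε > (0 : ℝ), ∀ l ∈ Set.Ioo (lstar - ε) lstar, ∀ l' ∈ Set.Ioo lstar (lstar + ε),
        N l ≠ N l') := by
  have hm1 : (1:ℝ) < (m:ℝ) := by
    have : (3:ℝ) ≤ (m:ℝ) := by exact_mod_cast hm
    linarith
  have hm0 : (0:ℝ) < (m:ℝ) - 1 := by linarith
  set a : ℕ → ℝ := fun i => ρ₀ i - κ₀ / ((m:ℝ) - 1) with ha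
  set b : ℕ → ℝ := fun j => ρ₁ j - κ₁ / ((m:ℝ) - 1) with hb
  have hab : ∀ (i j : ℕ) (l : ℝ), 0 < l → σ i j l = a i + b j / l := by
    intro i j l hl
    rw [hσ i j l hl]
    simp only [ha, hb]
    field_simp
    ring
  have hdiv : ∀ x l : ℝ, 0 < l → (x / l < 0 ↔ x < 0) := by
    intro x l hl
    rw [div_neg_iff]
    constructor
    · rintro (⟨_, h⟩ | ⟨h, _⟩)
      · linarith
      · exact h
    · intro h; exact Or.inr ⟨h, hl⟩
  have ha1 : a 1 < 0 := by
    simp only [ha, hρ₀one]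
    have : 0 < κ₀ / ((m:ℝ) - 1) := div_pos hκ₀ hm0
    linarith
  have hb1 : b 1 < 0 := by
    simp only [hb, hρ₁one]
    have : 0 < κ₁ / ((m:ℝ) - 1) := div_pos hκ₁ hm0
    linarith
  have hale : ∀ i j : ℕ, 1 ≤ i → i ≤ j → a i ≤ a j := by
    intro i j hi hij
    rcases eq_or_lt_of_le hij with h | h
    · rw [h]
    · have := hρ₀mono i j hi h
      simp only [ha]
      linarith
  have hble : ∀ i j : ℕ, 1 ≤ i → i ≤ j → b i ≤ b j := by
    intro i j hi hij
    rcases eq_or_lt_of_le hij with h | h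
    · rw [h]
    · have := hρ₁mono i j hi h
      simp only [hb]
      linarith
  have haunb : ∀ C : ℝ, ∃ i : ℕ, 1 ≤ i ∧ C < a i := by
    intro C
    obtain ⟨i, hi1, hi2⟩ := hρ₀unb (C + κ₀ / ((m:ℝ) - 1))
    exact ⟨i, hi1, by simp only [ha]; linarith⟩
  have hbunb : ∀ C : ℝ, ∃ j : ℕ, 1 ≤ j ∧ C < b j := by
    intro C
    obtain ⟨j, hj1, hj2⟩ := hρ₁unb (C + κ₁ / ((m:ℝ) - 1))
    exact ⟨j, hj1, by simp only [hb]; linarith⟩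
  -- part 1: finiteness
  have hfin : ∀ l : ℝ, 0 < l →
      {p : ℕ × ℕ | 1 ≤ p.1 ∧ 1 ≤ p.2 ∧ p ≠ (1, 1) ∧ σ p.1 p.2 l < 0}.Finite := by
    intro l hl
    obtain ⟨I, hI1, hIa⟩ := haunb (-(b 1) / l)
    obtain ⟨J, hJ1, hJb⟩ := hbunb (-(a 1) * l)
    apply Set.Finite.subset (Finset.range I ×ˢ Finset.range J).finite_toSet
    rintro ⟨i, j⟩ ⟨hi, hj, hne, hneg⟩
    rw [hab i j l hl] at hneg
    have hneg' : a i * l + b j < 0 := by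
      have h := mul_neg_of_neg_of_pos hneg hl
      have heq : (a i + b j / l) * l = a i * l + b j := by field_simp
      linarith [heq ▸ h]
    simp only [Finset.coe_product, Set.mem_prod, Finset.mem_coe, Finset.mem_range]
    constructor
    · by_contra h
      push_neg at h
      have h1 : a I ≤ a i := hale I i hI1 h
      have h2 : b 1 ≤ b j := hble 1 j le_rfl hj
      have h4 : -(b 1) < a I * l := by rwa [div_lt_iff₀ hl] at hIa
      have h5 : a I * l ≤ a i * l := mul_le_mul_of_nonneg_right h1 hl.le
      linarith
    · by_contra h
      push_neg at h
      have h1 : b J ≤ b j := hble J j hJ1 h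
      have h2 : a 1 ≤ a i := hale 1 i le_rfl hi
      have h5 : a 1 * l ≤ a i * l := mul_le_mul_of_nonneg_right h2 hl.le
      linarith
  -- sign lemma via IVT
  have hsign : ∀ (A B l₁ l₂ : ℝ), 0 < l₁ → l₁ ≤ l₂ →
      (∀ c : ℝ, l₁ ≤ c → c ≤ l₂ → A + B / c ≠ 0) →
      (A + B / l₁ < 0 ↔ A + B / l₂ < 0) := by
    intro A B l₁ l₂ h1 h12 hnz
    have h2 : 0 < l₂ := lt_of_lt_of_le h1 h12
    have key : ∀ c ∈ Set.Icc l₁ l₂, A * c + B ≠ 0 := by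
      intro c hc h0
      have hc0 : 0 < c := lt_of_lt_of_le h1 hc.1
      apply hnz c hc.1 hc.2
      have : A + B / c = (A * c + B) / c := by field_simp
      rw [this, h0, zero_div]
    have hcont : ContinuousOn (fun c : ℝ => A * c + B) (Set.Icc l₁ l₂) :=
      ((continuous_const.mul continuous_id).add continuous_const).continuousOn
    have hr1 : A + B / l₁ = (A * l₁ + B) / l₁ := by field_simp
    have hr2 : A + B / l₂ = (A * l₂ + B) / l₂ := by field_simp
    rw [hr1, hr2, hdiv _ _ h1, hdiv _ _ h2]
    constructor
    · intro hlt
      by_contra hge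
      push_neg at hge
      obtain ⟨c, hc, hfc⟩ := intermediate_value_Icc h12 hcont ⟨le_of_lt hlt, hge⟩
      exact key c hc hfc
    · intro hlt
      by_contra hge
      push_neg at hge
      obtain ⟨c, hc, hfc⟩ := intermediate_value_Icc' h12 hcont ⟨le_of_lt hlt, hge⟩
      exact key c hc hfc
  -- part 2
  have part2 : ∀ l₁ l₂ : ℝ, 0 < l₁ → l₁ ≤ l₂ → (∀ l : ℝ, l₁ ≤ l → l ≤ l₂ → l ∉ Λ) →
      N l₁ = N l₂ := by
    intro l₁ l₂ h1 h12 hgap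
    have h2 : 0 < l₂ := lt_of_lt_of_le h1 h12
    have hiff : ∀ p : ℕ × ℕ, (1 ≤ p.1 ∧ 1 ≤ p.2 ∧ p ≠ (1,1) ∧ σ p.1 p.2 l₁ < 0) ↔
        (1 ≤ p.1 ∧ 1 ≤ p.2 ∧ p ≠ (1,1) ∧ σ p.1 p.2 l₂ < 0) := by
      intro p
      have hnz : 1 ≤ p.1 → 1 ≤ p.2 → p ≠ (1,1) →
          ∀ c : ℝ, l₁ ≤ c → c ≤ l₂ → a p.1 + b p.2 / c ≠ 0 := by
        intro hp1 hp2 hp3 c hc1 hc2 h0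
        have hc : 0 < c := lt_of_lt_of_le h1 hc1
        apply hgap c hc1 hc2
        rw [hΛ]
        refine ⟨hc, p.1, p.2, hp1, hp2, ?_, by rw [hab _ _ _ hc]; exact h0⟩
        rw [Prod.mk.eta]; exact hp3
      constructor
      · rintro ⟨hp1, hp2, hp3, hp4⟩
        refine ⟨hp1, hp2, hp3, ?_⟩
        rw [hab _ _ _ h2]
        rw [hab _ _ _ h1] at hp4
        exact (hsign _ _ _ _ h1 h12 (hnz hp1 hp2 hp3)).mp hp4
      · rintro ⟨hp1, hp2, hp3, hp4⟩
        refine ⟨hp1, hp2, hp3, ?_⟩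
        rw [hab _ _ _ h1]
        rw [hab _ _ _ h2] at hp4
        exact (hsign _ _ _ _ h1 h12 (hnz hp1 hp2 hp3)).mpr hp4
    have hfin1 := hfin l₁ h1
    have hs1 : ∀ p : ℕ × ℕ, p ∈ hfin1.toFinset ↔
        (1 ≤ p.1 ∧ 1 ≤ p.2 ∧ p ≠ (1,1) ∧ σ p.1 p.2 l₁ < 0) := by
      intro p
      simp only [Set.Finite.mem_toFinset, Set.mem_setOf_eq]
    have hs2 : ∀ p : ℕ × ℕ, p ∈ hfin1.toFinset ↔
        (1 ≤ p.1 ∧ 1 ≤ p.2 ∧ p ≠ (1,1) ∧ σ p.1 p.2 l₂ < 0) :=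
      fun p => (hs1 p).trans (hiff p)
    rw [hN l₁ h1 hfin1.toFinset hs1, hN l₂ h2 hfin1.toFinset hs2]
  -- a i cannot vanish at a degenerate pair
  have hane : ∀ i j : ℕ, 1 ≤ i → 1 ≤ j → (i, j) ≠ (1, 1) → ∀ l : ℝ, 0 < l →
      σ i j l = 0 → a i ≠ 0 := by
    intro i j hi hj hne l hl hz h0
    have hz' : a i + b j / l = 0 := by rw [← hab i j l hl]; exact hz
    have hbz : b j = 0 := by
      rw [h0, zero_add, div_eq_zero_iff] at hz'
      rcases hz' with h | h
      · exact h
      · exact absurd h (ne_of_gt hl)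
    have hia : ρ₀ i = κ₀ / ((m:ℝ)-1) := by simp only [ha] at h0; linarith
    have hjb : ρ₁ j = κ₁ / ((m:ℝ)-1) := by simp only [hb] at hbz; linarith
    have hii : i = istar := by
      rcases lt_trichotomy i istar with h | h | h
      · exact absurd hia (ne_of_lt (histar3 i hi h))
      · exact h
      · exfalso; have := hρ₀mono istar i histar1 h; linarith
    have hjj : j = jstar := by
      rcases lt_trichotomy j jstar with h | h | h
      · exact absurd hjb (ne_of_lt (hjstar3 j hj h))
      · exact h
      · exfalso; have := hρ₁mono jstar j hjstar1 h; linarith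
    exact hnondeg ⟨hii ▸ hia, hjj ▸ hjb⟩
  -- local finiteness of Λ
  have hΛloc : ∀ u v : ℝ, 0 < u → (Λ ∩ Set.Icc u v).Finite := by
    intro u v hu
    obtain ⟨I, hI1, hIa⟩ := haunb (-(b 1) / u)
    obtain ⟨J, hJ1, hJb⟩ := hbunb (-(a 1) * v)
    apply Set.Finite.subset ((((Finset.range I ×ˢ Finset.range jstar) ∪
      (Finset.range istar ×ˢ Finset.range J)).image
      (fun r : ℕ × ℕ => -(b r.2) / a r.1)).finite_toSet)
    rintro l ⟨hlΛ, hlu, hlv⟩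
    rw [hΛ] at hlΛ
    obtain ⟨hl0, i, j, hi, hj, hne, hz⟩ := hlΛ
    have hz' : a i + b j / l = 0 := by rw [← hab i j l hl0]; exact hz
    have hai : a i ≠ 0 := hane i j hi hj hne l hl0 hz
    have hbeq : b j = -(a i) * l := by
      have h := hz'
      field_simp [hl0.ne'] at h
      linarith
    have hleq : -(b j) / a i = l := by
      rw [hbeq]
      field_simp
    simp only [Finset.coe_image, Set.mem_image, Finset.mem_coe, Finset.mem_union,
      Finset.mem_product, Finset.mem_range]
    refine ⟨(i, j), ?_, hleq⟩
    rcases lt_or_gt_of_ne hai with hneg | hpos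
    · right
      constructor
      · by_contra hh
        push_neg at hh
        have h1 : a istar ≤ a i := hale istar i histar1 hh
        have h2 : (0:ℝ) ≤ a istar := by simp only [ha]; linarith
        linarith
      · by_contra hh
        push_neg at hh
        have h1 : b J ≤ b j := hble J j hJ1 hh
        have h2 : a 1 ≤ a i := hale 1 i le_rfl hi
        have h3 : (-(a i)) * l ≤ (-(a 1)) * l :=
          mul_le_mul_of_nonneg_right (by linarith) hl0.le
        have h4 : (-(a 1)) * l ≤ (-(a 1)) * v :=
          mul_le_mul_of_nonneg_left hlv (by linarith)
        linarith
    · left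
      constructor
      · by_contra hh
        push_neg at hh
        have h1 : a I ≤ a i := hale I i hI1 hh
        have h2 : b 1 ≤ b j := hble 1 j le_rfl hj
        have h4 : -(b 1) < a I * u := by rwa [div_lt_iff₀ hu] at hIa
        have h5 : a I * u ≤ a i * u := mul_le_mul_of_nonneg_right h1 hu.le
        have h6 : a i * u ≤ a i * l := mul_le_mul_of_nonneg_left hlu hpos.le
        linarith
      · by_contra hh
        push_neg at hh
        have h1 : b jstar ≤ b j := hble jstar j hjstar1 hh
        have h2 : (0:ℝ) ≤ b jstar := by simp only [hb]; linarith
        have h3 : 0 < a i * l := mul_pos hpos hl0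
        linarith
  -- smallest positive values of a and b
  have haposmin : ∃ δ : ℝ, 0 < δ ∧ ∀ i : ℕ, 1 ≤ i → 0 < a i → δ ≤ a i := by
    rcases lt_or_ge 0 (a istar) with h | h
    · refine ⟨a istar, h, ?_⟩
      intro i hi hpos
      by_contra hh
      push_neg at hh
      have h2 : i < istar := by
        by_contra h3
        push_neg at h3
        exact absurd (hale istar i histar1 h3) (not_le.mpr hh)
      have := histar3 i hi h2
      simp only [ha] at hpos
      linarith
    · have h0 : a istar = 0 := le_antisymm h (by simp only [ha]; linarith)
      refine ⟨a (istar + 1), ?_, ?_⟩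
      · have := hρ₀mono istar (istar+1) histar1 (Nat.lt_succ_self _)
        simp only [ha] at h0 ⊢
        linarith
      · intro i hi hpos
        have hii : istar + 1 ≤ i := by
          by_contra h2
          push_neg at h2
          have h3 : i ≤ istar := Nat.lt_succ_iff.mp h2
          have := hale i istar hi h3
          linarith
        exact hale (istar+1) i (by omega) hii
  have hbposmin : ∃ δ : ℝ, 0 < δ ∧ ∀ j : ℕ, 1 ≤ j → 0 < b j → δ ≤ b j := by
    rcases lt_or_ge 0 (b jstar) with h | h
    · refine ⟨b jstar, h, ?_⟩
      intro j hj hpos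
      by_contra hh
      push_neg at hh
      have h2 : j < jstar := by
        by_contra h3
        push_neg at h3
        exact absurd (hble jstar j hjstar1 h3) (not_le.mpr hh)
      have := hjstar3 j hj h2
      simp only [hb] at hpos
      linarith
    · have h0 : b jstar = 0 := le_antisymm h (by simp only [hb]; linarith)
      refine ⟨b (jstar + 1), ?_, ?_⟩
      · have := hρ₁mono jstar (jstar+1) hjstar1 (Nat.lt_succ_self _)
        simp only [hb] at h0 ⊢
        linarith
      · intro j hj hpos
        have hjj : jstar + 1 ≤ j := by
          by_contra h2
          push_neg at h2
          have h3 : j ≤ jstar := Nat.lt_succ_iff.mp h2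
          have := hble j jstar hj h3
          linarith
        exact hble (jstar+1) j (by omega) hjj
  obtain ⟨δa, hδa, hδa2⟩ := haposmin
  obtain ⟨δb, hδb, hδb2⟩ := hbposmin
  refine ⟨hfin, part2, ?_⟩
  -- the exceptional set
  refine ⟨{l : ℝ | l ∈ Λ ∧
      (∃ p : ℕ × ℕ, 1 ≤ p.1 ∧ 1 ≤ p.2 ∧ p ≠ (1,1) ∧ σ p.1 p.2 l = 0 ∧ 0 < a p.1) ∧
      (∃ q : ℕ × ℕ, 1 ≤ q.1 ∧ 1 ≤ q.2 ∧ q ≠ (1,1) ∧ σ q.1 q.2 l = 0 ∧ a q.1 < 0)}, ?_, ?_⟩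
  · -- F is finite
    have hc₀ : 0 < δb / (-(a 1)) := div_pos hδb (by linarith)
    apply Set.Finite.subset (hΛloc (δb / (-(a 1))) ((-(b 1)) / δa) hc₀)
    rintro l ⟨hlΛ, ⟨p, hp1, hp2, hp3, hp4, hp5⟩, ⟨q, hq1, hq2, hq3, hq4, hq5⟩⟩
    have hl0 : 0 < l := by rw [hΛ] at hlΛ; exact hlΛ.1
    refine ⟨hlΛ, ?_, ?_⟩
    · -- δb / (-(a 1)) ≤ l
      have hz' : a q.1 + b q.2 / l = 0 := by
        rw [← hab q.1 q.2 l hl0]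
        exact hq4
      have hbeq : b q.2 = -(a q.1) * l := by
        have h := hz'
        field_simp [hl0.ne'] at h
        linarith
      have hbpos : 0 < b q.2 := by
        rw [hbeq]
        exact mul_pos (by linarith) hl0
      have h1 : δb ≤ b q.2 := hδb2 q.2 hq2 hbpos
      have h2 : a 1 ≤ a q.1 := hale 1 q.1 le_rfl hq1
      rw [div_le_iff₀ (by linarith : (0:ℝ) < -(a 1))]
      have h3 : (-(a q.1)) * l ≤ (-(a 1)) * l :=
        mul_le_mul_of_nonneg_right (by linarith) hl0.le
      linarith
    · -- l ≤ (-(b 1)) / δa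
      have hz' : a p.1 + b p.2 / l = 0 := by
        rw [← hab p.1 p.2 l hl0]
        exact hp4
      have hbeq : b p.2 = -(a p.1) * l := by
        have h := hz'
        field_simp [hl0.ne'] at h
        linarith
      have h1 : δa ≤ a p.1 := hδa2 p.1 hp1 hp5
      have h2 : b 1 ≤ b p.2 := hble 1 p.2 le_rfl hp2
      rw [le_div_iff₀ hδa]
      have h3 : δa * l ≤ a p.1 * l := mul_le_mul_of_nonneg_right h1 hl0.le
      nlinarith
  -- main statement about index jumps
  intro lstar hlst hnF
  have hlstmem := hlst
  rw [hΛ] at hlstmem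
  obtain ⟨hl0, i₀, j₀, hi₀, hj₀, hne₀, hz₀⟩ := hlstmem
  have hz₀' : a i₀ + b j₀ / lstar = 0 := by rw [← hab _ _ _ hl0]; exact hz₀
  -- punctured neighborhood free of Λ
  have hS : ((Λ ∩ Set.Icc (lstar/2) (2*lstar)) \ {lstar}).Finite :=
    (hΛloc (lstar/2) (2*lstar) (by linarith)).diff
  have hopen : IsOpen (((Λ ∩ Set.Icc (lstar/2) (2*lstar)) \ {lstar})ᶜ) :=
    hS.isClosed.isOpen_compl
  have hlstar_mem : lstar ∈ ((Λ ∩ Set.Icc (lstar/2) (2*lstar)) \ {lstar})ᶜ := by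
    simp only [Set.mem_compl_iff, Set.mem_diff, Set.mem_singleton_iff]
    tauto
  obtain ⟨ε₀, hε₀, hball⟩ := Metric.isOpen_iff.mp hopen lstar hlstar_mem
  set ε := min ε₀ (lstar/2) with hεdef
  have hε : 0 < ε := lt_min hε₀ (by linarith)
  have hεle : ε ≤ lstar/2 := min_le_right _ _
  have hnoΛ : ∀ l : ℝ, lstar - ε < l → l < lstar + ε → l ≠ lstar → l ∉ Λ := by
    intro l h1 h2 h3 hlΛ
    have hmem : l ∈ Metric.ball lstar ε₀ := by
      rw [Metric.mem_ball, Real.dist_eq, abs_lt]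
      have := min_le_left ε₀ (lstar/2)
      constructor <;> linarith
    have hnot : lstar - ε < l → l ∉ ((Λ ∩ Set.Icc (lstar/2) (2*lstar)) \ {lstar}) :=
      fun _ => hball hmem
    exact (hnot h1) ⟨⟨hlΛ, ⟨by linarith, by linarith⟩⟩, h3⟩
  have hnz' : ∀ (i j : ℕ), 1 ≤ i → 1 ≤ j → (i, j) ≠ (1, 1) → ∀ l : ℝ,
      lstar - ε < l → l < lstar + ε → l ≠ lstar → a i + b j / l ≠ 0 := by
    intro i j hi hj hne l h1 h2 h3 h0
    have hl0' : 0 < l := by linarith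
    apply hnoΛ l h1 h2 h3
    rw [hΛ]
    exact ⟨hl0', i, j, hi, hj, hne, by rw [hab i j l hl0']; exact h0⟩
  have hpers : ∀ (i j : ℕ), 1 ≤ i → 1 ≤ j → (i, j) ≠ (1, 1) →
      a i + b j / lstar ≠ 0 → ∀ l : ℝ, lstar - ε < l → l < lstar + ε →
      (a i + b j / l < 0 ↔ a i + b j / lstar < 0) := by
    intro i j hi hj hne h0 l h1 h2
    have hl0' : 0 < l := by linarith
    rcases le_total l lstar with h | h
    · apply hsign _ _ _ _ hl0' h
      intro c hc1 hc2
      rcases eq_or_lt_of_le hc2 with he | hlt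
      · rw [he]; exact h0
      · exact hnz' i j hi hj hne c (by linarith) (by linarith) (ne_of_lt hlt)
    · refine (hsign (a i) (b j) lstar l hl0 h ?_).symm
      intro c hc1 hc2
      rcases eq_or_lt_of_le hc1 with he | hlt
      · rw [← he]; exact h0
      · exact hnz' i j hi hj hne c (by linarith) (by linarith) (ne_of_gt hlt)
  have hzs : ∀ (i j : ℕ), a i + b j / lstar = 0 → ∀ l : ℝ, 0 < l →
      (a i + b j / l < 0 ↔ a i * (l - lstar) < 0) := by
    intro i j h0 l hl'
    have hbeq : b j = -(a i) * lstar := by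
      have h := h0
      field_simp [hl0.ne'] at h
      linarith
    have heq : a i + b j / l = (a i * (l - lstar)) / l := by
      rw [hbeq]
      field_simp
      ring
    rw [heq]
    exact hdiv _ _ hl'
  by_cases hcase : ∀ (i j : ℕ), 1 ≤ i → 1 ≤ j → (i,j) ≠ (1,1) →
      a i + b j / lstar = 0 → a i < 0
  · -- all crossings have a < 0 : index jumps up across lstar
    set lp := lstar + ε/2 with hlpdef
    have hlp0 : 0 < lp := by simp only [hlpdef]; linarith
    have hsfin := hfin lstar hl0
    have htfin := hfin lp hlp0
    refine ⟨ε, hε, ?_⟩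
    intro l hl l' hl'
    obtain ⟨hla, hlb⟩ := hl
    obtain ⟨hl'a, hl'b⟩ := hl'
    have hll0 : 0 < l := by linarith
    have hl'0 : 0 < l' := by linarith
    -- left characterization
    have hiffL : ∀ i j : ℕ, 1 ≤ i → 1 ≤ j → (i,j) ≠ (1,1) →
        (a i + b j / l < 0 ↔ a i + b j / lstar < 0) := by
      intro i j hi hj hne
      by_cases h0 : a i + b j / lstar = 0
      · have hneg := hcase i j hi hj hne h0
        rw [hzs i j h0 l hll0]
        constructor
        · intro hlt; nlinarith
        · intro hlt; rw [h0] at hlt; exact absurd hlt (lt_irrefl 0)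
      · exact hpers i j hi hj hne h0 l (by linarith) (by linarith)
    -- right characterization
    have hiffR : ∀ lr : ℝ, lstar < lr → lr < lstar + ε → ∀ i j : ℕ, 1 ≤ i → 1 ≤ j →
        (i,j) ≠ (1,1) →
        (a i + b j / lr < 0 ↔ (a i + b j / lstar < 0 ∨ a i + b j / lstar = 0)) := by
      intro lr h1 h2 i j hi hj hne
      have hlr0 : 0 < lr := by linarith
      by_cases h0 : a i + b j / lstar = 0
      · have hneg := hcase i j hi hj hne h0
        rw [hzs i j h0 lr hlr0]
        constructor
        · intro _; exact Or.inr h0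
        · intro _; nlinarith
      · rw [hpers i j hi hj hne h0 lr (by linarith) h2]
        constructor
        · exact Or.inl
        · rintro (h | h)
          · exact h
          · exact absurd h h0
    have hcharL : ∀ p : ℕ × ℕ, p ∈ hsfin.toFinset ↔
        (1 ≤ p.1 ∧ 1 ≤ p.2 ∧ p ≠ (1,1) ∧ σ p.1 p.2 l < 0) := by
      intro p
      simp only [Set.Finite.mem_toFinset, Set.mem_setOf_eq]
      have hne01 : p ≠ (1,1) → (p.1, p.2) ≠ (1,1) := by
        intro h3; rw [Prod.mk.eta]; exact h3
      constructor
      · rintro ⟨h1', h2', h3', h4'⟩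
        refine ⟨h1', h2', h3', ?_⟩
        rw [hab _ _ _ hll0]
        rw [hab _ _ _ hl0] at h4'
        exact (hiffL p.1 p.2 h1' h2' (hne01 h3')).mpr h4'
      · rintro ⟨h1', h2', h3', h4'⟩
        refine ⟨h1', h2', h3', ?_⟩
        rw [hab _ _ _ hl0]
        rw [hab _ _ _ hll0] at h4'
        exact (hiffL p.1 p.2 h1' h2' (hne01 h3')).mp h4'
    have hcharR : ∀ p : ℕ × ℕ, p ∈ htfin.toFinset ↔
        (1 ≤ p.1 ∧ 1 ≤ p.2 ∧ p ≠ (1,1) ∧ σ p.1 p.2 l' < 0) := by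
      intro p
      simp only [Set.Finite.mem_toFinset, Set.mem_setOf_eq]
      have hne01 : p ≠ (1,1) → (p.1, p.2) ≠ (1,1) := by
        intro h3; rw [Prod.mk.eta]; exact h3
      constructor
      · rintro ⟨h1', h2', h3', h4'⟩
        refine ⟨h1', h2', h3', ?_⟩
        rw [hab _ _ _ hl'0]
        rw [hab _ _ _ hlp0] at h4'
        exact (hiffR l' hl'a hl'b p.1 p.2 h1' h2' (hne01 h3')).mpr
          ((hiffR lp (by simp only [hlpdef]; linarith) (by simp only [hlpdef]; linarith)
            p.1 p.2 h1' h2' (hne01 h3')).mp h4')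
      · rintro ⟨h1', h2', h3', h4'⟩
        refine ⟨h1', h2', h3', ?_⟩
        rw [hab _ _ _ hlp0]
        rw [hab _ _ _ hl'0] at h4'
        exact (hiffR lp (by simp only [hlpdef]; linarith) (by simp only [hlpdef]; linarith)
          p.1 p.2 h1' h2' (hne01 h3')).mpr
          ((hiffR l' hl'a hl'b p.1 p.2 h1' h2' (hne01 h3')).mp h4')
    rw [hN l hll0 hsfin.toFinset hcharL, hN l' hl'0 htfin.toFinset hcharR]
    apply ne_of_lt
    apply Finset.sum_lt_sum_of_subset
      (i := (i₀, j₀))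
    · -- subset
      intro p hp
      simp only [Set.Finite.mem_toFinset, Set.mem_setOf_eq] at hp ⊢
      obtain ⟨h1', h2', h3', h4'⟩ := hp
      refine ⟨h1', h2', h3', ?_⟩
      rw [hab _ _ _ hlp0]
      rw [hab _ _ _ hl0] at h4'
      have hne01 : (p.1, p.2) ≠ (1,1) := by rw [Prod.mk.eta]; exact h3'
      exact (hiffR lp (by simp only [hlpdef]; linarith) (by simp only [hlpdef]; linarith)
        p.1 p.2 h1' h2' hne01).mpr (Or.inl h4')
    · -- (i₀, j₀) ∈ t
      simp only [Set.Finite.mem_toFinset, Set.mem_setOf_eq]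
      refine ⟨hi₀, hj₀, hne₀, ?_⟩
      rw [hab _ _ _ hlp0]
      exact (hiffR lp (by simp only [hlpdef]; linarith) (by simp only [hlpdef]; linarith)
        i₀ j₀ hi₀ hj₀ hne₀).mpr (Or.inr hz₀')
    · -- (i₀, j₀) ∉ s
      simp only [Set.Finite.mem_toFinset, Set.mem_setOf_eq]
      rintro ⟨-, -, -, h4'⟩
      rw [hz₀] at h4'
      exact absurd h4' (lt_irrefl 0)
    · exact Nat.mul_pos (hμ₀ i₀) (hμ₁ j₀)
    · intro p _ _
      exact Nat.zero_le _
  · -- some crossing has a > 0, and by lstar ∉ F all crossings have a > 0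
    push_neg at hcase
    obtain ⟨ip, jp, hip, hjp, hnep, hzp, hap⟩ := hcase
    have hap' : 0 < a ip :=
      lt_of_le_of_ne hap (Ne.symm (hane ip jp hip hjp hnep lstar hl0
        (by rw [hab _ _ _ hl0]; exact hzp)))
    have hcase' : ∀ (i j : ℕ), 1 ≤ i → 1 ≤ j → (i,j) ≠ (1,1) →
        a i + b j / lstar = 0 → 0 < a i := by
      intro i j hi hj hne h0
      have hne0 : a i ≠ 0 := hane i j hi hj hne lstar hl0 (by rw [hab _ _ _ hl0]; exact h0)
      rcases lt_or_gt_of_ne hne0 with hlt | hgt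
      · exfalso
        apply hnF
        refine ⟨hlst, ⟨(ip, jp), hip, hjp, hnep, by rw [hab _ _ _ hl0]; exact hzp, hap'⟩,
          ⟨(i, j), hi, hj, hne, by rw [hab _ _ _ hl0]; exact h0, hlt⟩⟩
      · exact hgt
    set lm := lstar - ε/2 with hlmdef
    have hlm0 : 0 < lm := by simp only [hlmdef]; linarith
    have hsfin := hfin lstar hl0
    have htfin := hfin lm hlm0
    refine ⟨ε, hε, ?_⟩
    intro l hl l' hl'
    obtain ⟨hla, hlb⟩ := hl
    obtain ⟨hl'a, hl'b⟩ := hl'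
    have hll0 : 0 < l := by linarith
    have hl'0 : 0 < l' := by linarith
    -- right characterization: same as lstar
    have hiffR : ∀ i j : ℕ, 1 ≤ i → 1 ≤ j → (i,j) ≠ (1,1) →
        (a i + b j / l' < 0 ↔ a i + b j / lstar < 0) := by
      intro i j hi hj hne
      by_cases h0 : a i + b j / lstar = 0
      · have hpos := hcase' i j hi hj hne h0
        rw [hzs i j h0 l' hl'0]
        constructor
        · intro hlt; nlinarith
        · intro hlt; rw [h0] at hlt; exact absurd hlt (lt_irrefl 0)
      · exact hpers i j hi hj hne h0 l' (by linarith) (by linarith)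
    -- left characterization
    have hiffL : ∀ ll : ℝ, lstar - ε < ll → ll < lstar → ∀ i j : ℕ, 1 ≤ i → 1 ≤ j →
        (i,j) ≠ (1,1) →
        (a i + b j / ll < 0 ↔ (a i + b j / lstar < 0 ∨ a i + b j / lstar = 0)) := by
      intro ll h1 h2 i j hi hj hne
      have hll0' : 0 < ll := by linarith
      by_cases h0 : a i + b j / lstar = 0
      · have hpos := hcase' i j hi hj hne h0
        rw [hzs i j h0 ll hll0']
        constructor
        · intro _; exact Or.inr h0
        · intro _; nlinarith
      · rw [hpers i j hi hj hne h0 ll h1 (by linarith)]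
        constructor
        · exact Or.inl
        · rintro (h | h)
          · exact h
          · exact absurd h h0
    have hcharR : ∀ p : ℕ × ℕ, p ∈ hsfin.toFinset ↔
        (1 ≤ p.1 ∧ 1 ≤ p.2 ∧ p ≠ (1,1) ∧ σ p.1 p.2 l' < 0) := by
      intro p
      simp only [Set.Finite.mem_toFinset, Set.mem_setOf_eq]
      have hne01 : p ≠ (1,1) → (p.1, p.2) ≠ (1,1) := by
        intro h3; rw [Prod.mk.eta]; exact h3
      constructor
      · rintro ⟨h1', h2', h3', h4'⟩
        refine ⟨h1', h2', h3', ?_⟩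
        rw [hab _ _ _ hl'0]
        rw [hab _ _ _ hl0] at h4'
        exact (hiffR p.1 p.2 h1' h2' (hne01 h3')).mpr h4'
      · rintro ⟨h1', h2', h3', h4'⟩
        refine ⟨h1', h2', h3', ?_⟩
        rw [hab _ _ _ hl0]
        rw [hab _ _ _ hl'0] at h4'
        exact (hiffR p.1 p.2 h1' h2' (hne01 h3')).mp h4'
    have hcharL : ∀ p : ℕ × ℕ, p ∈ htfin.toFinset ↔
        (1 ≤ p.1 ∧ 1 ≤ p.2 ∧ p ≠ (1,1) ∧ σ p.1 p.2 l < 0) := by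
      intro p
      simp only [Set.Finite.mem_toFinset, Set.mem_setOf_eq]
      have hne01 : p ≠ (1,1) → (p.1, p.2) ≠ (1,1) := by
        intro h3; rw [Prod.mk.eta]; exact h3
      constructor
      · rintro ⟨h1', h2', h3', h4'⟩
        refine ⟨h1', h2', h3', ?_⟩
        rw [hab _ _ _ hll0]
        rw [hab _ _ _ hlm0] at h4'
        exact (hiffL l hla hlb p.1 p.2 h1' h2' (hne01 h3')).mpr
          ((hiffL lm (by simp only [hlmdef]; linarith) (by simp only [hlmdef]; linarith)
            p.1 p.2 h1' h2' (hne01 h3')).mp h4')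
      · rintro ⟨h1', h2', h3', h4'⟩
        refine ⟨h1', h2', h3', ?_⟩
        rw [hab _ _ _ hlm0]
        rw [hab _ _ _ hll0] at h4'
        exact (hiffL lm (by simp only [hlmdef]; linarith) (by simp only [hlmdef]; linarith)
          p.1 p.2 h1' h2' (hne01 h3')).mpr
          ((hiffL l hla hlb p.1 p.2 h1' h2' (hne01 h3')).mp h4')
    rw [hN l hll0 htfin.toFinset hcharL, hN l' hl'0 hsfin.toFinset hcharR]
    apply ne_of_gt
    apply Finset.sum_lt_sum_of_subset
      (i := (i₀, j₀))
    · -- subset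
      intro p hp
      simp only [Set.Finite.mem_toFinset, Set.mem_setOf_eq] at hp ⊢
      obtain ⟨h1', h2', h3', h4'⟩ := hp
      refine ⟨h1', h2', h3', ?_⟩
      rw [hab _ _ _ hlm0]
      rw [hab _ _ _ hl0] at h4'
      have hne01 : (p.1, p.2) ≠ (1,1) := by rw [Prod.mk.eta]; exact h3'
      exact (hiffL lm (by simp only [hlmdef]; linarith) (by simp only [hlmdef]; linarith)
        p.1 p.2 h1' h2' hne01).mpr (Or.inl h4')
    · -- (i₀, j₀) ∈ t
      simp only [Set.Finite.mem_toFinset, Set.mem_setOf_eq]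
      refine ⟨hi₀, hj₀, hne₀, ?_⟩
      rw [hab _ _ _ hlm0]
      exact (hiffL lm (by simp only [hlmdef]; linarith) (by simp only [hlmdef]; linarith)
        i₀ j₀ hi₀ hj₀ hne₀).mpr (Or.inr hz₀')
    · -- (i₀, j₀) ∉ s
      simp only [Set.Finite.mem_toFinset, Set.mem_setOf_eq]
      rintro ⟨-, -, -, h4'⟩
      rw [hz₀] at h4'
      exact absurd h4' (lt_irrefl 0)
    · exact Nat.mul_pos (hμ₀ i₀) (hμ₁ j₀)
    · intro p _ _
      exact Nat.zero_le _
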